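/- arXiv:1202.0964 — 2 statements merged into one kernel-verified Lean document; each statement's English description precedes it below -/
import Mathlib

section
/- If G is a simple graph of order n ≥ 2 whose complement has a balanced bipartite component, then q₂(G) = n − 2. -/
open Matrix SimpleGraph
open scoped Classical
set_option linter.unusedSectionVars false
set_option maxHeartbeats 1000000

/-- The `k`-th largest eigenvalue (1-indexed, counted with multiplicity) of a real
symmetric (Hermitian) matrix; junk value `0` if `M` is not Hermitian or `k` is out of range. -/
noncomputable def kthEig {V : Type*} [Fintype V] [DecidableEq V]
    (M : Matrix V V ℝ) (k : ℕ) : ℝ :=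
  if hM : M.IsHermitian then
    if h : k - 1 < Fintype.card V then
      letI f : Fin (Fintype.card V) → ℝ := hM.eigenvalues ∘ (Fintype.equivFin V).symm
      (f ∘ Tuple.sort f) (Fin.rev ⟨k - 1, h⟩)
    else 0
  else 0

/-- The signless Laplacian `Q(G) = D(G) + A(G)` of a simple graph `G`. -/
noncomputable def signlessLap {V : Type*} [Fintype V] [DecidableEq V]
    (G : SimpleGraph V) [DecidableRel G.Adj] : Matrix V V ℝ :=
  G.degMatrix ℝ + G.adjMatrix ℝ

/-- `qEig G k` is the `k`-th largest signless Laplacian eigenvalue `q_k(G)`. -/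
noncomputable def qEig {V : Type*} [Fintype V] [DecidableEq V]
    (G : SimpleGraph V) [DecidableRel G.Adj] (k : ℕ) : ℝ :=
  kthEig (signlessLap G) k

/-- `c` is a bipartite connected component of `H`: the vertex set of the component splits
into two disjoint classes `U`, `W` such that every edge of the component joins `U` and `W`. -/
def IsBipartiteComponent {V : Type*} (H : SimpleGraph V) (c : H.ConnectedComponent) : Prop :=
  ∃ U W : Set V, U ∪ W = c.supp ∧ Disjoint U W ∧
    ∀ ⦃u v : V⦄, u ∈ c.supp → H.Adj u v → (u ∈ U ∧ v ∈ W) ∨ (u ∈ W ∧ v ∈ U)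

/-- `c` is a balanced bipartite connected component of `H`: bipartite with vertex classes
of equal size. -/
def IsBalancedBipartiteComponent {V : Type*} (H : SimpleGraph V)
    (c : H.ConnectedComponent) : Prop :=
  ∃ U W : Set V, U ∪ W = c.supp ∧ Disjoint U W ∧ U.ncard = W.ncard ∧
    ∀ ⦃u v : V⦄, u ∈ c.supp → H.Adj u v → (u ∈ U ∧ v ∈ W) ∨ (u ∈ W ∧ v ∈ U)

/-- `G` is the complete multipartite graph whose parts are the fibers of `p`:
two vertices are adjacent iff they lie in different parts. -/
def IsCompleteMultipartiteWith {V ι : Type*} (G : SimpleGraph V) (p : V → ι) : Prop :=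
  ∀ u v : V, G.Adj u v ↔ p u ≠ p v


section Helpers

noncomputable def qf {V : Type*} [Fintype V] (M : Matrix V V ℝ) (v : V → ℝ) : ℝ :=
  ∑ u, ∑ w, v u * M u w * v w

variable {V : Type*} [Fintype V] [DecidableEq V]

lemma inner_formula (x y : EuclideanSpace ℝ V) : (inner ℝ x y : ℝ) = ∑ u, x u * y u := by
  simp [PiLp.inner_apply, RCLike.inner_apply, conj_trivial, mul_comm]

lemma repr_formula (M : Matrix V V ℝ) (hM : M.IsHermitian) (v : EuclideanSpace ℝ V) (i : V) :
    hM.eigenvectorBasis.repr v i = ∑ u, hM.eigenvectorBasis i u * v u := by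
  rw [OrthonormalBasis.repr_apply_apply]
  exact inner_formula _ _

lemma repr_mulVec (M : Matrix V V ℝ) (hM : M.IsHermitian) (v : V → ℝ) (i : V) :
    hM.eigenvectorBasis.repr (WithLp.toLp 2 (M *ᵥ v)) i
      = hM.eigenvalues i * hM.eigenvectorBasis.repr (WithLp.toLp 2 v) i := by
  rw [repr_formula]
  have h1 : ∑ u, hM.eigenvectorBasis i u * (WithLp.toLp 2 (M *ᵥ v)) u = (⇑(hM.eigenvectorBasis i)) ⬝ᵥ (M *ᵥ v) := rfl
  rw [h1, Matrix.dotProduct_mulVec, ← Matrix.mulVec_transpose,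
    show Mᵀ = M from (M.conjTranspose_eq_transpose_of_trivial ▸ hM.eq : Mᵀ = M),
    hM.mulVec_eigenvectorBasis, smul_dotProduct]
  rw [repr_formula]
  simp [dotProduct, smul_eq_mul]

lemma qf_eq_sum_eigen (M : Matrix V V ℝ) (hM : M.IsHermitian) (v : V → ℝ) :
    qf M v = ∑ i, hM.eigenvalues i * (hM.eigenvectorBasis.repr (WithLp.toLp 2 v) i)^2 := by
  have h0 : qf M v = (inner ℝ (WithLp.toLp 2 v) (WithLp.toLp 2 (M *ᵥ v)) : ℝ) := by
    rw [inner_formula]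
    simp [qf, Matrix.mulVec, dotProduct, Finset.mul_sum, mul_assoc]
  rw [h0, ← hM.eigenvectorBasis.repr.inner_map_map, inner_formula]
  refine Finset.sum_congr rfl fun i _ => ?_
  rw [repr_mulVec M hM v i]
  ring

lemma sum_sq_eq_sum_repr (M : Matrix V V ℝ) (hM : M.IsHermitian) (v : V → ℝ) :
    ∑ u, (v u)^2 = ∑ i, (hM.eigenvectorBasis.repr (WithLp.toLp 2 v) i)^2 := by
  have h0 : ∑ u, (v u)^2 = (inner ℝ (WithLp.toLp 2 v) (WithLp.toLp 2 v) : ℝ) := by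
    rw [inner_formula]; simp [sq]
  rw [h0, ← hM.eigenvectorBasis.repr.inner_map_map, inner_formula]
  simp [sq]

/-- Lower bound: a 2-dim subspace with Rayleigh quotient `≥ c` gives two eigenvalues `≥ c`. -/
lemma two_le_count_ge (M : Matrix V V ℝ) (hM : M.IsHermitian) (c : ℝ) (w₁ w₂ : V → ℝ)
    (hne : ∀ a b : ℝ, (a ≠ 0 ∨ b ≠ 0) → ∃ u, a * w₁ u + b * w₂ u ≠ 0)
    (hform : ∀ a b : ℝ, c * ∑ u, (a * w₁ u + b * w₂ u)^2 ≤ qf M (fun u => a * w₁ u + b * w₂ u)) :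
    2 ≤ (Finset.univ.filter fun i => c ≤ hM.eigenvalues i).card := by
  classical
  set B := hM.eigenvectorBasis with hB
  set lam := hM.eigenvalues with hlam
  -- coordinates of the combination
  set s : ℝ → ℝ → V → ℝ := fun a b i => a * B.repr (WithLp.toLp 2 w₁) i + b * B.repr (WithLp.toLp 2 w₂) i with hs
  have hrepr : ∀ (a b : ℝ) (i : V),
      B.repr (WithLp.toLp 2 (fun u => a * w₁ u + b * w₂ u)) i = s a b i := by
    intro a b i
    have : WithLp.toLp 2 (fun u => a * w₁ u + b * w₂ u)
        = a • WithLp.toLp 2 w₁ + b • WithLp.toLp 2 w₂ := rfl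
    rw [this, map_add, _root_.map_smul, _root_.map_smul]
    simp [s, smul_eq_mul]
  have hform' : ∀ a b : ℝ, c * ∑ i, (s a b i)^2 ≤ ∑ i, lam i * (s a b i)^2 := by
    intro a b
    have h1 := hform a b
    rw [qf_eq_sum_eigen M hM, sum_sq_eq_sum_repr M hM] at h1
    simpa only [← hB, ← hlam, hrepr] using h1
  have hne' : ∀ a b : ℝ, (a ≠ 0 ∨ b ≠ 0) → ∃ i, s a b i ≠ 0 := by
    intro a b hab
    by_contra hall
    push_neg at hall
    obtain ⟨u, hu⟩ := hne a b hab
    have h2 : ∑ u, ((fun u => a * w₁ u + b * w₂ u) u)^2 = 0 := by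
      rw [sum_sq_eq_sum_repr M hM]
      simp only [← hB, hrepr]
      simp [hall]
    have h3 : ∀ u : V, (a * w₁ u + b * w₂ u)^2 = 0 := by
      intro u'
      have := Finset.sum_eq_zero_iff_of_nonneg
        (fun i _ => sq_nonneg ((fun u => a * w₁ u + b * w₂ u) i)) |>.mp h2
      exact this u' (Finset.mem_univ _)
    exact hu (pow_eq_zero_iff two_ne_zero |>.mp (h3 u))
  -- common final step
  have final : ∀ a b : ℝ, (a ≠ 0 ∨ b ≠ 0) → (∀ i, s a b i ≠ 0 → lam i < c) → False := by
    intro a b hab hsmall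
    obtain ⟨j, hj⟩ := hne' a b hab
    have hstrict : ∑ i, lam i * (s a b i)^2 < ∑ i, c * (s a b i)^2 := by
      apply Finset.sum_lt_sum
      · intro i _
        by_cases hi : s a b i = 0
        · simp [hi]
        · exact mul_le_mul_of_nonneg_right (le_of_lt (hsmall i hi)) (sq_nonneg _)
      · exact ⟨j, Finset.mem_univ j,
          mul_lt_mul_of_pos_right (hsmall j hj) (sq_pos_iff.mpr hj)⟩
    rw [← Finset.mul_sum] at hstrict
    exact absurd (hform' a b) (not_le.mpr hstrict)
  by_contra hcard
  push_neg at hcard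
  interval_cases hc : (Finset.univ.filter fun i => c ≤ lam i).card
  · -- empty filter : all eigenvalues < c
    have hall : ∀ i, lam i < c := by
      intro i
      by_contra hi
      have : i ∈ Finset.univ.filter fun i => c ≤ lam i := by
        simp [not_lt.mp hi]
      simpa [Finset.card_eq_zero.mp hc] using this
    exact final 1 0 (Or.inl one_ne_zero) fun i _ => hall i
  · -- singleton filter
    obtain ⟨i₀, hi₀⟩ := Finset.card_eq_one.mp hc
    have hout : ∀ i, i ≠ i₀ → lam i < c := by
      intro i hi
      by_contra hge
      have : i ∈ Finset.univ.filter fun i => c ≤ lam i := by simp [not_lt.mp hge]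
      rw [hi₀] at this
      exact hi (Finset.mem_singleton.mp this)
    by_cases hz : B.repr (WithLp.toLp 2 w₁) i₀ = 0 ∧ B.repr (WithLp.toLp 2 w₂) i₀ = 0
    · refine final 1 0 (Or.inl one_ne_zero) fun i hi => ?_
      refine hout i fun he => hi ?_
      rw [he]; simp [s, hz.1]
    · have hab : (B.repr (WithLp.toLp 2 w₂) i₀ : ℝ) ≠ 0 ∨ -(B.repr (WithLp.toLp 2 w₁) i₀) ≠ 0 := by
        rcases not_and_or.mp hz with h | h
        · exact Or.inr (by simpa using h)
        · exact Or.inl h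
      refine final (B.repr (WithLp.toLp 2 w₂) i₀) (-(B.repr (WithLp.toLp 2 w₁) i₀)) hab fun i hi => ?_
      refine hout i fun he => hi ?_
      rw [he]; simp [s]; ring

/-- Upper bound: quadratic form `≤ c` on a hyperplane gives at most one eigenvalue `> c`.-/
lemma count_gt_le_one (M : Matrix V V ℝ) (hM : M.IsHermitian) (c : ℝ)
    (hyp : ∀ v : V → ℝ, ∑ u, v u = 0 → qf M v ≤ c * ∑ u, (v u)^2) :
    (Finset.univ.filter fun i => c < hM.eigenvalues i).card ≤ 1 := by
  classical
  by_contra hcard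
  push_neg at hcard
  obtain ⟨i, hi, j, hj, hij⟩ := Finset.one_lt_card.mp hcard
  simp only [Finset.mem_filter] at hi hj
  set B := hM.eigenvectorBasis with hB
  set lam := hM.eigenvalues with hlam
  set si : ℝ := ∑ u, B i u with hsi
  set sj : ℝ := ∑ u, B j u with hsj
  have hzchoice : ∃ α β : ℝ, (α ≠ 0 ∨ β ≠ 0) ∧ α * si + β * sj = 0 := by
    by_cases hz : si = 0 ∧ sj = 0
    · exact ⟨1, 0, Or.inl one_ne_zero, by simp [hz.1]⟩
    · refine ⟨sj, -si, ?_, by ring⟩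
      rcases not_and_or.mp hz with h | h
      · exact Or.inr (by simpa using h)
      · exact Or.inl h
  obtain ⟨α, β, hab, hzero⟩ := hzchoice
  set v : V → ℝ := fun u => α * B i u + β * B j u with hv
  have hsum : ∑ u, v u = 0 := by
    simp only [hv, Finset.sum_add_distrib, ← Finset.mul_sum]
    rw [← hsi, ← hsj]; exact hzero
  have hrepr : ∀ k, B.repr (WithLp.toLp 2 v) k
      = α * (if k = i then 1 else 0) + β * (if k = j then 1 else 0) := by
    intro k
    have : WithLp.toLp 2 v = α • (B i) + β • (B j) := rfl
    rw [this, map_add, _root_.map_smul, _root_.map_smul, B.repr_self, B.repr_self]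
    simp [EuclideanSpace.single_apply, smul_eq_mul]
  have hq : qf M v = lam i * α^2 + lam j * β^2 := by
    rw [qf_eq_sum_eigen M hM]
    have : ∀ k, lam k * (B.repr (WithLp.toLp 2 v) k)^2
        = (if k = i then lam i * α^2 else 0) + (if k = j then lam j * β^2 else 0) := by
      intro k
      rw [hrepr k]
      by_cases hk : k = i
      · subst hk
        simp [if_neg hij]
        try ring
      · by_cases hk' : k = j
        · subst hk'
          simp [hk]
          try ring
        · simp [hk, hk']
    rw [Finset.sum_congr rfl fun k _ => this k, Finset.sum_add_distrib,
      Finset.sum_ite_eq' Finset.univ i, Finset.sum_ite_eq' Finset.univ j]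
    simp
  have hn : ∑ u, (v u)^2 = α^2 + β^2 := by
    rw [sum_sq_eq_sum_repr M hM]
    have : ∀ k, (B.repr (WithLp.toLp 2 v) k)^2
        = (if k = i then α^2 else 0) + (if k = j then β^2 else 0) := by
      intro k
      rw [hrepr k]
      by_cases hk : k = i
      · subst hk
        simp [if_neg hij]
        try ring
      · by_cases hk' : k = j
        · subst hk'
          simp [hk]
          try ring
        · simp [hk, hk']
    rw [Finset.sum_congr rfl fun k _ => this k, Finset.sum_add_distrib,
      Finset.sum_ite_eq' Finset.univ i, Finset.sum_ite_eq' Finset.univ j]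
    simp
  have h1 := hyp v hsum
  rw [hq, hn] at h1
  rcases hab with ha | hb
  · nlinarith [sq_nonneg α, sq_nonneg β, sq_pos_iff.mpr ha, hi.2, hj.2]
  · nlinarith [sq_nonneg α, sq_nonneg β, sq_pos_iff.mpr hb, hi.2, hj.2]

lemma filter_card_comp_equiv {α β : Type*} [Fintype α] [Fintype β] [DecidableEq β]
    (e : α ≃ β) (p : β → Prop) [DecidablePred p] :
    (Finset.univ.filter fun a => p (e a)).card = (Finset.univ.filter p).card := by
  apply Finset.card_bij (fun a _ => e a)
  · intro a ha
    simp only [Finset.mem_filter, Finset.mem_univ, true_and] at ha ⊢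
    exact ha
  · intro a _ b _ hab
    exact e.injective hab
  · intro b hb
    refine ⟨e.symm b, ?_, by simp⟩
    simp only [Finset.mem_filter, Finset.mem_univ, true_and] at hb ⊢
    simpa using hb

lemma kthEig_two_eq {V : Type*} [Fintype V] [DecidableEq V] (M : Matrix V V ℝ)
    (hM : M.IsHermitian) (hc : 2 ≤ Fintype.card V) (c : ℝ)
    (h1 : 2 ≤ (Finset.univ.filter fun v => c ≤ hM.eigenvalues v).card)
    (h2 : (Finset.univ.filter fun v => c < hM.eigenvalues v).card ≤ 1) :
    kthEig M 2 = c := by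
  classical
  have hlt : (2:ℕ) - 1 < Fintype.card V := by omega
  rw [kthEig, dif_pos hM, dif_pos hlt]
  set N := Fintype.card V with hN
  set f : Fin N → ℝ := hM.eigenvalues ∘ (Fintype.equivFin V).symm with hf
  set g : Fin N → ℝ := f ∘ Tuple.sort f with hg
  have hmono : Monotone g := Tuple.monotone_sort f
  -- counts transfer
  have hcount : ∀ p : ℝ → Prop, ∀ _ : DecidablePred p,
      (Finset.univ.filter fun i => p (g i)).card
        = (Finset.univ.filter fun v => p (hM.eigenvalues v)).card := by
    intro p hp
    have e1 : (Finset.univ.filter fun i => p (g i)).card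
        = (Finset.univ.filter fun i => p (f i)).card :=
      filter_card_comp_equiv (Tuple.sort f) (fun i => p (f i))
    have e2 : (Finset.univ.filter fun i => p (f i)).card
        = (Finset.univ.filter fun v => p (hM.eigenvalues v)).card :=
      filter_card_comp_equiv (Fintype.equivFin V).symm (fun v => p (hM.eigenvalues v))
    exact e1.trans e2
  have h1' : 2 ≤ (Finset.univ.filter fun i => c ≤ g i).card := by
    rw [hcount (fun x => c ≤ x) inferInstance]; exact h1
  have h2' : (Finset.univ.filter fun i => c < g i).card ≤ 1 := by
    rw [hcount (fun x => c < x) inferInstance]; exact h2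
  set i₂ : Fin N := Fin.rev ⟨2 - 1, hlt⟩ with hi₂
  have hi₂v : (i₂ : ℕ) = N - 2 := by
    simp [hi₂, Fin.rev]
    try omega
  set itop : Fin N := ⟨N - 1, by omega⟩ with hitop
  have hle : i₂ ≤ itop := by
    rw [Fin.le_def, hi₂v]; simp only [hitop]; omega
  have hne : i₂ ≠ itop := by
    intro hcontra
    have := congrArg Fin.val hcontra
    rw [hi₂v] at this
    simp only [hitop] at this
    omega
  show g i₂ = c
  have hge : c ≤ g i₂ := by
    by_contra hlt'
    push_neg at hlt'
    have hsub : (Finset.univ.filter fun i => c ≤ g i) ⊆ {itop} := by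
      intro i hi
      simp only [Finset.mem_filter, Finset.mem_univ, true_and] at hi
      simp only [Finset.mem_singleton]
      have : ¬ i ≤ i₂ := fun hii => absurd (le_trans hi (hmono hii)) (not_le.mpr hlt')
      rw [Fin.le_def, hi₂v] at this
      push_neg at this
      have hiv : (i : ℕ) < N := i.isLt
      exact Fin.ext (by simp [hitop]; omega)
    have := Finset.card_le_card hsub
    simp at this
    omega
  have hle2 : g i₂ ≤ c := by
    by_contra hlt'
    push_neg at hlt'
    have hsub : ({i₂, itop} : Finset (Fin N)) ⊆ Finset.univ.filter fun i => c < g i := by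
      intro i hi
      simp only [Finset.mem_insert, Finset.mem_singleton] at hi
      simp only [Finset.mem_filter, Finset.mem_univ, true_and]
      rcases hi with rfl | rfl
      · exact hlt'
      · exact lt_of_lt_of_le hlt' (hmono hle)
    have := Finset.card_le_card hsub
    rw [Finset.card_pair hne] at this
    omega
  linarith

variable {V : Type*} [Fintype V] [DecidableEq V]

lemma signlessLap_apply (H : SimpleGraph V) [DecidableRel H.Adj] (u w : V) :
    signlessLap H u w = (if u = w then (H.degree u : ℝ) else 0)
      + (if H.Adj u w then 1 else 0) := by
  simp [signlessLap, SimpleGraph.degMatrix, Matrix.diagonal, Matrix.add_apply]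

lemma isHermitian_signlessLap (H : SimpleGraph V) [DecidableRel H.Adj] :
    (signlessLap H).IsHermitian := by
  rw [Matrix.IsHermitian, conjTranspose_eq_transpose_of_trivial]
  ext u w
  rw [Matrix.transpose_apply, signlessLap_apply, signlessLap_apply]
  by_cases h : u = w
  · subst h; rfl
  · simp [h, Ne.symm h, SimpleGraph.adj_comm]

/-- `2 qᴳ(v) = ∑_{u,w adjacent} (v_u + v_w)²`. -/
lemma two_mul_qf_signlessLap (H : SimpleGraph V) [DecidableRel H.Adj] (v : V → ℝ) :
    2 * qf (signlessLap H) v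
      = ∑ u, ∑ w, (if H.Adj u w then (v u + v w)^2 else 0) := by
  have hdeg : ∀ (t : V → ℝ) (u : V), ∑ w, (if H.Adj u w then t u else 0)
      = (H.degree u : ℝ) * t u := by
    intro t u
    rw [Finset.sum_ite, Finset.sum_const_zero, add_zero, Finset.sum_const, nsmul_eq_mul]
    have hc : (Finset.univ.filter fun w => H.Adj u w).card = H.degree u := by
      rw [← SimpleGraph.neighborFinset_eq_filter]; rfl
    rw [hc]
  have point : ∀ u w, v u * signlessLap H u w * v w
      = (if w = u then (H.degree u : ℝ) * (v u)^2 else 0)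
        + (if H.Adj u w then v u * v w else 0) := by
    intro u w
    rw [signlessLap_apply]
    by_cases h : u = w
    · subst h
      simp [SimpleGraph.irrefl, sq]
      ring
    · simp [h, Ne.symm h]
  have lhs : qf (signlessLap H) v = ∑ u, (H.degree u : ℝ) * (v u)^2
      + ∑ u, ∑ w, (if H.Adj u w then v u * v w else 0) := by
    rw [qf]
    rw [Finset.sum_congr rfl fun u (_ : u ∈ Finset.univ) =>
          Finset.sum_congr rfl fun w (_ : w ∈ Finset.univ) => point u w]
    rw [Finset.sum_congr rfl fun u (_ : u ∈ Finset.univ) => Finset.sum_add_distrib]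
    rw [Finset.sum_add_distrib]
    congr 1
    refine Finset.sum_congr rfl fun u _ => ?_
    rw [Finset.sum_ite_eq' Finset.univ u]
    simp
  have swap : ∑ u, ∑ w, (if H.Adj u w then (v w)^2 else 0)
      = ∑ u, ∑ w, (if H.Adj u w then (v u)^2 else 0) := by
    rw [Finset.sum_comm]
    refine Finset.sum_congr rfl fun u _ => Finset.sum_congr rfl fun w _ => ?_
    simp [SimpleGraph.adj_comm]
  have expand : ∀ u w : V, (if H.Adj u w then (v u + v w)^2 else 0)
      = (if H.Adj u w then (v u)^2 else 0) + (if H.Adj u w then (v w)^2 else 0)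
        + 2 * (if H.Adj u w then v u * v w else 0) := by
    intro u w
    by_cases h : H.Adj u w <;> simp [h] <;> ring
  have e1 : ∑ u, ∑ w, (if H.Adj u w then (v u)^2 else 0)
      = ∑ u, (H.degree u : ℝ) * (v u)^2 :=
    Finset.sum_congr rfl fun u _ => hdeg (fun x => (v x)^2) u
  have e2 : ∑ u, ∑ w, 2 * (if H.Adj u w then v u * v w else 0)
      = 2 * ∑ u, ∑ w, (if H.Adj u w then v u * v w else 0) := by
    rw [Finset.mul_sum]
    exact Finset.sum_congr rfl fun u _ => (Finset.mul_sum _ _ _).symm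
  rw [Finset.sum_congr rfl fun u (_ : u ∈ Finset.univ) =>
        Finset.sum_congr rfl fun w (_ : w ∈ Finset.univ) => expand u w]
  rw [Finset.sum_congr rfl fun u (_ : u ∈ Finset.univ) => Finset.sum_add_distrib]
  rw [Finset.sum_add_distrib]
  rw [Finset.sum_congr rfl fun u (_ : u ∈ Finset.univ) => Finset.sum_add_distrib]
  rw [Finset.sum_add_distrib]
  rw [e1, swap, e1, e2, lhs]
  ring

lemma qf_signlessLap_nonneg (H : SimpleGraph V) [DecidableRel H.Adj] (v : V → ℝ) :
    0 ≤ qf (signlessLap H) v := by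
  have h := two_mul_qf_signlessLap H v
  have h2 : (0:ℝ) ≤ ∑ u, ∑ w, (if H.Adj u w then (v u + v w)^2 else 0) := by
    apply Finset.sum_nonneg
    intro u _
    apply Finset.sum_nonneg
    intro w _
    by_cases hadj : H.Adj u w <;> simp [hadj, sq_nonneg]
  linarith

lemma qf_add_compl {n : ℕ} (hn : 1 ≤ n) (G : SimpleGraph (Fin n)) [DecidableRel G.Adj]
    (v : Fin n → ℝ) :
    qf (signlessLap G) v + qf (signlessLap Gᶜ) v
      = ((n:ℝ) - 2) * ∑ u, (v u)^2 + (∑ u, v u)^2 := by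
  have key : ∀ u w, v u * signlessLap G u w * v w + v u * signlessLap Gᶜ u w * v w
      = v u * v w + (if w = u then ((n:ℝ) - 2) * (v u)^2 else 0) := by
    intro u w
    rw [signlessLap_apply, signlessLap_apply]
    by_cases h : u = w
    · subst h
      have hdc : Gᶜ.degree u = Fintype.card (Fin n) - 1 - G.degree u :=
        SimpleGraph.degree_compl G u
      have hlt : G.degree u < Fintype.card (Fin n) := G.degree_lt_card_verts u
      rw [Fintype.card_fin] at hdc hlt
      have hnat : G.degree u + Gᶜ.degree u = n - 1 := by omega
      have hreal : (G.degree u : ℝ) + (Gᶜ.degree u : ℝ) = (n:ℝ) - 1 := by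
        have := congrArg (fun m : ℕ => (m : ℝ)) hnat
        push_cast [Nat.cast_sub hn] at this
        linarith
      have h1 : ¬ G.Adj u u := G.irrefl
      have h2 : ¬ Gᶜ.Adj u u := Gᶜ.irrefl
      rw [if_pos rfl, if_pos rfl, if_pos rfl, if_neg h1, if_neg h2]
      nlinarith [hreal]
    · have h' : ¬ w = u := fun hh => h hh.symm
      rw [if_neg h, if_neg h, if_neg h']
      by_cases hadj : G.Adj u w
      · have : ¬ Gᶜ.Adj u w := by simp [SimpleGraph.compl_adj, hadj]
        rw [if_pos hadj, if_neg this]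
        ring
      · have : Gᶜ.Adj u w := by simp [SimpleGraph.compl_adj, h, hadj]
        rw [if_neg hadj, if_pos this]
        ring
  rw [qf, qf, ← Finset.sum_add_distrib]
  rw [Finset.sum_congr rfl fun u (_ : u ∈ Finset.univ) =>
    (Finset.sum_add_distrib (s := (Finset.univ : Finset (Fin n)))).symm]
  rw [Finset.sum_congr rfl fun u (_ : u ∈ Finset.univ) =>
        Finset.sum_congr rfl fun w (_ : w ∈ Finset.univ) => key u w]
  rw [Finset.sum_congr rfl fun u (_ : u ∈ Finset.univ) => Finset.sum_add_distrib]
  rw [Finset.sum_add_distrib]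
  have e1 : ∑ u, ∑ w, v u * v w = (∑ u, v u)^2 := by
    rw [sq, Finset.sum_mul_sum]
  have e2 : ∑ u : Fin n, ∑ w : Fin n, (if w = u then ((n:ℝ) - 2) * (v u)^2 else 0)
      = ((n:ℝ) - 2) * ∑ u, (v u)^2 := by
    rw [Finset.mul_sum]
    refine Finset.sum_congr rfl fun u _ => ?_
    rw [Finset.sum_ite_eq' Finset.univ u]
    simp
  rw [e1, e2]
  ring

end Helpers

/-- If `G` is a graph of order `n ≥ 2` whose complement has a balanced bipartite
component, then `q₂(G) = n - 2`. -/
theorem q2_eq_of_balanced_bipartite_component (n : ℕ) (hn : 2 ≤ n)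
    (G : SimpleGraph (Fin n)) [DecidableRel G.Adj]
    (h : ∃ c : Gᶜ.ConnectedComponent, IsBalancedBipartiteComponent Gᶜ c) :
    qEig G 2 = (n : ℝ) - 2 := by
  classical
  obtain ⟨comp, U, W, hUW, hdisj, hcard, hbip⟩ := h
  have hM : (signlessLap G).IsHermitian := isHermitian_signlessLap G
  have hn1 : 1 ≤ n := by omega
  have hid : ∀ v : Fin n → ℝ, qf (signlessLap G) v
      = ((n:ℝ) - 2) * ∑ u, (v u)^2 + (∑ u, v u)^2 - qf (signlessLap Gᶜ) v := by
    intro v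
    have := qf_add_compl hn1 G v
    linarith
  -- upper count
  have h2 : (Finset.univ.filter fun i => (n:ℝ) - 2 < hM.eigenvalues i).card ≤ 1 := by
    apply count_gt_le_one _ hM
    intro v hv
    have hpsd := qf_signlessLap_nonneg Gᶜ v
    rw [hid v, hv]
    have h0 : ((0:ℝ))^2 = 0 := by norm_num
    rw [h0]
    linarith
  -- nonemptiness of the two classes
  obtain ⟨x₀, hx₀⟩ := comp.exists_rep
  have hx₀' : x₀ ∈ comp.supp := by
    rw [SimpleGraph.ConnectedComponent.mem_supp_iff]
    exact hx₀
  have hUfin : U.Finite := Set.toFinite U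
  have hWfin : W.Finite := Set.toFinite W
  have hUne : U.Nonempty := by
    by_contra hU
    rw [Set.not_nonempty_iff_eq_empty] at hU
    have hw0 : W.ncard = 0 := by rw [← hcard, hU]; simp
    have hW : W = ∅ := (Set.ncard_eq_zero hWfin).mp hw0
    rw [hU, hW] at hUW
    simp only [Set.union_empty] at hUW
    rw [← hUW] at hx₀'
    exact hx₀'
  obtain ⟨u₀, hu₀⟩ := hUne
  have hWne : W.Nonempty := by
    have hpos : 0 < U.ncard := (Set.ncard_pos hUfin).mpr ⟨u₀, hu₀⟩
    rw [hcard] at hpos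
    exact (Set.ncard_pos hWfin).mp hpos
  obtain ⟨p₀, hp₀⟩ := hWne
  have hkk : U.toFinset.card = W.toFinset.card := by
    rw [← Set.ncard_eq_toFinset_card', ← Set.ncard_eq_toFinset_card', hcard]
  have hkkr : (W.toFinset.card : ℝ) = (U.toFinset.card : ℝ) := by rw [hkk]
  set w₁ : Fin n → ℝ := fun u => if u ∈ U then 1 else if u ∈ W then 1 else 0 with hw₁
  set w₂ : Fin n → ℝ := fun u => if u ∈ U then 1 else if u ∈ W then -1 else 0 with hw₂
  set iU : Fin n → ℝ := fun u => if u ∈ U.toFinset then (1:ℝ) else 0 with hiU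
  set iW : Fin n → ℝ := fun u => if u ∈ W.toFinset then (1:ℝ) else 0 with hiW
  have hUind : ∑ u, iU u = (U.toFinset.card : ℝ) := by
    rw [hiU, Finset.sum_ite_mem, Finset.univ_inter, Finset.sum_const, nsmul_eq_mul, mul_one]
  have hWind : ∑ u, iW u = (W.toFinset.card : ℝ) := by
    rw [hiW, Finset.sum_ite_mem, Finset.univ_inter, Finset.sum_const, nsmul_eq_mul, mul_one]
  have hiUnn : ∀ u, 0 ≤ iU u := by intro u; rw [hiU]; dsimp only; split <;> norm_num
  have hiWnn : ∀ u, 0 ≤ iW u := by intro u; rw [hiW]; dsimp only; split <;> norm_num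
  -- pointwise description of the test vectors
  have hval : ∀ a b : ℝ, ∀ u, a * w₁ u + b * w₂ u = (a+b) * iU u + (a-b) * iW u := by
    intro a b u
    simp only [hw₁, hw₂, hiU, hiW, Set.mem_toFinset]
    by_cases hu : u ∈ U
    · have hnw : u ∉ W := Set.disjoint_left.mp hdisj hu
      simp [hu, hnw]
    · by_cases hw : u ∈ W
      · simp [hu, hw]
        ring
      · simp [hu, hw]
  have hsum : ∀ a b : ℝ, ∑ u, (a * w₁ u + b * w₂ u) = 2 * a * (U.toFinset.card : ℝ) := by
    intro a b
    rw [Finset.sum_congr rfl fun u (_ : u ∈ Finset.univ) => hval a b u]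
    rw [Finset.sum_add_distrib, ← Finset.mul_sum, ← Finset.mul_sum, hUind, hWind, hkkr]
    ring
  -- lower count
  have h1 : 2 ≤ (Finset.univ.filter fun i => (n:ℝ) - 2 ≤ hM.eigenvalues i).card := by
    apply two_le_count_ge _ hM _ w₁ w₂
    · intro a b hab
      by_cases hs : a + b = 0
      · have hd : a - b ≠ 0 := by
          rcases hab with h | h <;> intro hc <;> apply h <;> linarith
        refine ⟨p₀, ?_⟩
        have hpU : p₀ ∉ U := Set.disjoint_right.mp hdisj hp₀
        simp only [hw₁, hw₂, if_neg hpU, if_pos hp₀]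
        intro hc; apply hd; linarith
      · refine ⟨u₀, ?_⟩
        simp only [hw₁, hw₂, if_pos hu₀]
        intro hc; apply hs; linarith
    · intro a b
      -- bound the complement form
      have hterm : ∀ u w : Fin n,
          (if Gᶜ.Adj u w then ((a * w₁ u + b * w₂ u) + (a * w₁ w + b * w₂ w))^2 else 0)
            ≤ 4 * a^2 * (iU u * iW w + iW u * iU w) := by
        intro u w
        have hrhsnn : 0 ≤ 4 * a^2 * (iU u * iW w + iW u * iU w) := by
          apply mul_nonneg (by positivity)
          exact add_nonneg (mul_nonneg (hiUnn u) (hiWnn w)) (mul_nonneg (hiWnn u) (hiUnn w))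
        by_cases hadj : Gᶜ.Adj u w
        · rw [if_pos hadj]
          by_cases hu : u ∈ U ∪ W
          · have hmem : u ∈ comp.supp := hUW ▸ hu
            rcases hbip hmem hadj with ⟨huU, hwW⟩ | ⟨huW, hwU⟩
            · have huW : u ∉ W := Set.disjoint_left.mp hdisj huU
              have hwU : w ∉ U := Set.disjoint_right.mp hdisj hwW
              simp only [hw₁, hw₂, hiU, hiW, Set.mem_toFinset, if_pos huU, if_neg hwU,
                if_pos hwW, if_neg huW]
              nlinarith [sq_nonneg a]
            · have huU : u ∉ U := Set.disjoint_right.mp hdisj huW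
              have hwW : w ∉ W := Set.disjoint_left.mp hdisj hwU
              simp only [hw₁, hw₂, hiU, hiW, Set.mem_toFinset, if_neg huU, if_pos huW,
                if_pos hwU, if_neg hwW]
              nlinarith [sq_nonneg a]
          · have hw' : w ∉ U ∪ W := by
              intro hwmem
              have := hbip (hUW ▸ hwmem) hadj.symm
              rcases this with ⟨_, hend⟩ | ⟨_, hend⟩
              · exact hu (Or.inr hend)
              · exact hu (Or.inl hend)
            have hu1 : u ∉ U := fun hh => hu (Or.inl hh)
            have hu2 : u ∉ W := fun hh => hu (Or.inr hh)
            have hw1 : w ∉ U := fun hh => hw' (Or.inl hh)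
            have hw2 : w ∉ W := fun hh => hw' (Or.inr hh)
            simp only [hw₁, hw₂, if_neg hu1, if_neg hu2, if_neg hw1, if_neg hw2]
            simpa using hrhsnn
        · rw [if_neg hadj]
          exact hrhsnn
      have hbound : qf (signlessLap Gᶜ) (fun u => a * w₁ u + b * w₂ u)
          ≤ 4 * a^2 * (U.toFinset.card : ℝ) * (W.toFinset.card : ℝ) := by
        have h2q := two_mul_qf_signlessLap Gᶜ (fun u => a * w₁ u + b * w₂ u)
        have hle : ∑ u, ∑ w, (if Gᶜ.Adj u w then
              ((a * w₁ u + b * w₂ u) + (a * w₁ w + b * w₂ w))^2 else 0)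
            ≤ ∑ u, ∑ w, 4 * a^2 * (iU u * iW w + iW u * iU w) :=
          Finset.sum_le_sum fun u _ => Finset.sum_le_sum fun w _ => hterm u w
        have inner : ∀ u : Fin n, ∑ w, 4 * a^2 * (iU u * iW w + iW u * iU w)
            = (4 * a^2 * iU u) * (W.toFinset.card : ℝ)
              + (4 * a^2 * iW u) * (U.toFinset.card : ℝ) := by
          intro u
          rw [Finset.sum_congr rfl fun w (_ : w ∈ Finset.univ) =>
            (show 4 * a^2 * (iU u * iW w + iW u * iU w)
              = (4 * a^2 * iU u) * iW w + (4 * a^2 * iW u) * iU w from by ring)]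
          rw [Finset.sum_add_distrib, ← Finset.mul_sum, ← Finset.mul_sum, hUind, hWind]
        have houter : ∑ u : Fin n, ∑ w, 4 * a^2 * (iU u * iW w + iW u * iU w)
            = 8 * a^2 * (U.toFinset.card : ℝ) * (W.toFinset.card : ℝ) := by
          rw [Finset.sum_congr rfl fun u (_ : u ∈ Finset.univ) => inner u]
          rw [Finset.sum_add_distrib]
          rw [Finset.sum_congr rfl fun u (_ : u ∈ Finset.univ) =>
            (show (4 * a^2 * iU u) * (W.toFinset.card : ℝ)
              = (4 * a^2 * (W.toFinset.card : ℝ)) * iU u from by ring)]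
          rw [Finset.sum_congr rfl fun u (_ : u ∈ Finset.univ) =>
            (show (4 * a^2 * iW u) * (U.toFinset.card : ℝ)
              = (4 * a^2 * (U.toFinset.card : ℝ)) * iW u from by ring)]
          rw [← Finset.mul_sum, ← Finset.mul_sum, hUind, hWind, hkkr]
          ring
        rw [houter] at hle
        linarith
      have hsq : (∑ u, (a * w₁ u + b * w₂ u))^2
          = 4 * a^2 * (U.toFinset.card : ℝ) * (U.toFinset.card : ℝ) := by
        rw [hsum a b]; ring
      rw [hid]
      have hWU : 4 * a^2 * (U.toFinset.card : ℝ) * (W.toFinset.card : ℝ)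
          = 4 * a^2 * (U.toFinset.card : ℝ) * (U.toFinset.card : ℝ) := by rw [hkkr]
      rw [hWU] at hbound
      rw [hsq]
      linarith [hbound]
  rw [qEig]
  refine kthEig_two_eq _ hM ?_ _ h1 h2
  rw [Fintype.card_fin]
  exact hn
end

section
/- If G is a simple graph of order n ≥ 2 whose complement has at least two bipartite components, then q₂(G) = n − 2. -/
open Matrix SimpleGraph
open scoped Classical

lemma card_filter_equiv {α β : Type*} [Fintype α] [Fintype β] (e : α ≃ β) (p : β → Prop) :
    (Finset.univ.filter (fun a => p (e a))).card = (Finset.univ.filter p).card := by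
  refine Finset.card_bij (fun a _ => e a) ?_ ?_ ?_
  · intro a ha
    simp only [Finset.mem_filter, Finset.mem_univ, true_and] at ha ⊢
    exact ha
  · intro a _ b _ hab
    exact e.injective hab
  · intro b hb
    simp only [Finset.mem_filter, Finset.mem_univ, true_and] at hb
    exact ⟨e.symm b, by simp [hb], by simp⟩

lemma sorted_val_eq {m : ℕ} (g : Fin m → ℝ) (t : ℝ) (hm : 2 ≤ m)
    (h1 : (Finset.univ.filter (fun i => t < g i)).card ≤ 1)
    (h2 : 2 ≤ (Finset.univ.filter (fun i => t ≤ g i)).card)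
    (i : Fin m) (hi : (i : ℕ) = m - 2) :
    (g ∘ Tuple.sort g) i = t := by
  set s : Fin m → ℝ := g ∘ Tuple.sort g with hs
  have hmono : Monotone s := Tuple.monotone_sort g
  have hc1 : (Finset.univ.filter (fun j => t < s j)).card ≤ 1 := by
    have := card_filter_equiv (Tuple.sort g : Equiv.Perm (Fin m)) (fun j => t < g j)
    calc (Finset.univ.filter (fun j => t < s j)).card
        = (Finset.univ.filter (fun j => t < g j)).card := this
      _ ≤ 1 := h1
  have hc2 : 2 ≤ (Finset.univ.filter (fun j => t ≤ s j)).card := by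
    have := card_filter_equiv (Tuple.sort g : Equiv.Perm (Fin m)) (fun j => t ≤ g j)
    calc (2:ℕ) ≤ (Finset.univ.filter (fun j => t ≤ g j)).card := h2
      _ = (Finset.univ.filter (fun j => t ≤ s j)).card := this.symm
  have hle : s i ≤ t := by
    by_contra hgt
    push_neg at hgt
    set last : Fin m := ⟨m - 1, by omega⟩ with hlast
    have hine : i ≠ last := by
      intro hcon
      have := congrArg Fin.val hcon
      simp only [hi, hlast] at this
      omega
    have hil : i ≤ last := by
      rw [Fin.le_def]; simp [hlast, hi]; omega
    have hsub : ({i, last} : Finset (Fin m)) ⊆ Finset.univ.filter (fun j => t < s j) := by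
      intro j hj
      simp only [Finset.mem_insert, Finset.mem_singleton] at hj
      rcases hj with rfl | rfl
      · simp only [Finset.mem_filter, Finset.mem_univ, true_and]; exact hgt
      · simp only [Finset.mem_filter, Finset.mem_univ, true_and]
        exact lt_of_lt_of_le hgt (hmono hil)
    have h2' : ({i, last} : Finset (Fin m)).card = 2 := by
      rw [Finset.card_insert_of_notMem (by simpa using hine), Finset.card_singleton]
    have := Finset.card_le_card hsub
    omega
  have hge : t ≤ s i := by
    obtain ⟨a, ha, b, hb, hab⟩ := Finset.one_lt_card.mp (by omega : 1 < (Finset.univ.filter (fun j => t ≤ s j)).card)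
    simp only [Finset.mem_filter, Finset.mem_univ, true_and] at ha hb
    rcases lt_or_gt_of_ne hab with hlt | hlt
    · have hai : a ≤ i := by
        rw [Fin.le_def, hi]
        have := b.isLt
        have := hlt
        rw [Fin.lt_def] at this
        omega
      exact le_trans ha (hmono hai)
    · have hbi : b ≤ i := by
        rw [Fin.le_def, hi]
        have := a.isLt
        have h2' := hlt
        rw [Fin.lt_def] at h2'
        omega
      exact le_trans hb (hmono hbi)
  linarith

lemma sum_ite_two {α : Type*} [Fintype α] [DecidableEq α] {i j : α} (hij : i ≠ j)
    (f : α → ℝ) (a b : ℝ) :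
    ∑ k, f k * (if k = i then a else if k = j then b else 0) = f i * a + f j * b := by
  have key : ∀ k, f k * (if k = i then a else if k = j then b else 0)
      = (if k = i then f i * a else 0) + (if k = j then f j * b else 0) := by
    intro k
    by_cases h1 : k = i
    · subst h1; rw [if_pos rfl, if_pos rfl, if_neg hij]; ring
    · by_cases h2 : k = j
      · subst h2; rw [if_neg h1, if_pos rfl, if_pos rfl, if_neg h1]; ring
      · rw [if_neg h1, if_neg h2, if_neg h1, if_neg h2]; ring
  simp_rw [key, Finset.sum_add_distrib, Finset.sum_ite_eq' Finset.univ, Finset.mem_univ, if_pos]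

lemma signlessLap_dot_nonneg {V : Type*} [Fintype V] [DecidableEq V]
    (H : SimpleGraph V) [DecidableRel H.Adj] (x : V → ℝ) :
    0 ≤ x ⬝ᵥ (signlessLap H *ᵥ x) := by
  have key : 2 * (x ⬝ᵥ (signlessLap H *ᵥ x))
      = ∑ i, ∑ j, if H.Adj i j then (x i + x j)^2 else 0 := by
    rw [signlessLap, add_mulVec, dotProduct_add, dotProduct_mulVec_degMatrix,
      dotProduct_mulVec_adjMatrix]
    have e1 : ∑ i, ∑ j, (if H.Adj i j then (x i + x j)^2 else 0)
        = ∑ i, ∑ j, ((if H.Adj i j then x i * x i else 0)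
          + ((if H.Adj i j then x j * x j else 0) + (if H.Adj i j then 2 * (x i * x j) else 0))) := by
      refine Finset.sum_congr rfl fun i _ => Finset.sum_congr rfl fun j _ => ?_
      split <;> ring
    rw [e1]
    simp_rw [Finset.sum_add_distrib]
    have e2 : ∑ i : V, ∑ j : V, (if H.Adj i j then x j * x j else 0)
        = ∑ i : V, ∑ j : V, (if H.Adj i j then x i * x i else 0) := by
      rw [Finset.sum_comm]
      refine Finset.sum_congr rfl fun i _ => Finset.sum_congr rfl fun j _ => ?_
      exact if_congr (adj_comm H j i) rfl rfl
    rw [e2]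
    have e3 : ∀ i : V, ∑ j : V, (if H.Adj i j then x i * x i else 0)
        = (H.degree i : ℝ) * x i * x i := by
      intro i
      rw [H.degree_eq_sum_if_adj (R := ℝ) i, Finset.sum_mul, Finset.sum_mul]
      refine Finset.sum_congr rfl fun j _ => ?_
      split <;> ring
    simp_rw [e3]
    have e4 : ∑ i : V, ∑ j : V, (if H.Adj i j then 2 * (x i * x j) else 0)
        = 2 * ∑ i : V, ∑ j : V, (if H.Adj i j then x i * x j else 0) := by
      rw [Finset.mul_sum]
      refine Finset.sum_congr rfl fun i _ => ?_
      rw [Finset.mul_sum]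
      refine Finset.sum_congr rfl fun j _ => ?_
      split <;> ring
    rw [e4]
    ring
  have h0 : 0 ≤ ∑ i : V, ∑ j : V, if H.Adj i j then (x i + x j)^2 else 0 := by
    refine Finset.sum_nonneg fun i _ => Finset.sum_nonneg fun j _ => ?_
    split
    · positivity
    · exact le_refl 0
  linarith

lemma signlessLap_isHermitian {V : Type*} [Fintype V] [DecidableEq V]
    (G : SimpleGraph V) [DecidableRel G.Adj] : (signlessLap G).IsHermitian := by
  have hs : (signlessLap G).IsSymm := (isSymm_degMatrix (R := ℝ) (G := G)).add (isSymm_adjMatrix _)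
  rw [Matrix.IsHermitian, conjTranspose_eq_transpose_of_trivial]
  exact hs

lemma signlessLap_compl_identity {n : ℕ} (hn : 1 ≤ n)
    (G : SimpleGraph (Fin n)) [DecidableRel G.Adj] (x : Fin n → ℝ) :
    x ⬝ᵥ (signlessLap G *ᵥ x)
      = ((n:ℝ) - 2) * (x ⬝ᵥ x) + (∑ v, x v)^2 - x ⬝ᵥ (signlessLap Gᶜ *ᵥ x) := by
  have hmat : signlessLap G + signlessLap Gᶜ
      = ((n:ℝ) - 2) • (1 : Matrix (Fin n) (Fin n) ℝ) + Matrix.of (fun _ _ => (1:ℝ)) := by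
    ext u v
    by_cases huv : u = v
    · subst huv
      have hdeg : Gᶜ.degree u = Fintype.card (Fin n) - 1 - G.degree u := G.degree_compl u
      have hlt : G.degree u < Fintype.card (Fin n) := G.degree_lt_card_verts u
      rw [Fintype.card_fin] at hdeg hlt
      have hcast : (Gᶜ.degree u : ℝ) = (n : ℝ) - 1 - (G.degree u : ℝ) := by
        rw [hdeg]
        push_cast [Nat.cast_sub (by omega : G.degree u ≤ n - 1), Nat.cast_sub (by omega : 1 ≤ n)]
        ring
      simp only [signlessLap, Matrix.add_apply, degMatrix, diagonal_apply_eq,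
        adjMatrix_apply, Matrix.smul_apply, Matrix.one_apply_eq, Matrix.of_apply, smul_eq_mul,
        if_neg (G.irrefl (v := u)), if_neg (Gᶜ.irrefl (v := u))]
      rw [hcast]
      ring
    · have h1 : (if G.Adj u v then (1:ℝ) else 0) + (if Gᶜ.Adj u v then (1:ℝ) else 0) = 1 := by
        by_cases ha : G.Adj u v
        · rw [if_pos ha, if_neg (by simp [compl_adj, ha])]; ring
        · rw [if_neg ha, if_pos (by simp [compl_adj, huv, ha])]; ring
      simp only [signlessLap, Matrix.add_apply, degMatrix, diagonal_apply_ne _ huv,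
        adjMatrix_apply, Matrix.smul_apply, Matrix.one_apply_ne huv, Matrix.of_apply]
      rw [smul_zero]
      linarith [h1]
  have hJ : x ⬝ᵥ ((Matrix.of (fun _ _ => (1:ℝ))) *ᵥ x) = (∑ v, x v)^2 := by
    simp only [dotProduct, mulVec, Matrix.of_apply, one_mul, sq]
    rw [← Finset.sum_mul]
  have hkey : x ⬝ᵥ ((signlessLap G + signlessLap Gᶜ) *ᵥ x)
      = ((n:ℝ) - 2) * (x ⬝ᵥ x) + (∑ v, x v)^2 := by
    rw [hmat, add_mulVec, dotProduct_add, smul_mulVec, one_mulVec, dotProduct_smul,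
      smul_eq_mul, hJ]
  rw [add_mulVec, dotProduct_add] at hkey
  linarith

lemma signlessLap_mulVec_apply' {V : Type*} [Fintype V] [DecidableEq V]
    (G : SimpleGraph V) [DecidableRel G.Adj] (v : V) (x : V → ℝ) :
    (signlessLap G *ᵥ x) v = (G.degree v : ℝ) * x v + ∑ u ∈ G.neighborFinset v, x u := by
  simp [signlessLap, add_mulVec, degMatrix_mulVec_apply, adjMatrix_mulVec_apply]

lemma exists_kernel_vec {V : Type*} [Fintype V] [DecidableEq V]
    (H : SimpleGraph V) [DecidableRel H.Adj]
    (c : H.ConnectedComponent) (hc : IsBipartiteComponent H c) :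
    ∃ x : V → ℝ, signlessLap H *ᵥ x = 0 ∧ (∀ v, v ∉ c.supp → x v = 0) ∧
      ∃ v, x v ≠ 0 ∧ v ∈ c.supp := by
  obtain ⟨U, W, hUW, hdisj, hbip⟩ := hc
  set x : V → ℝ := fun v => if v ∈ U then 1 else if v ∈ W then -1 else 0 with hx
  have hUsupp : ∀ v, v ∈ U → v ∈ c.supp := fun v hv => hUW ▸ Set.mem_union_left W hv
  have hWsupp : ∀ v, v ∈ W → v ∈ c.supp := fun v hv => hUW ▸ Set.mem_union_right U hv
  have hzero : ∀ v, v ∉ c.supp → x v = 0 := by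
    intro v hv
    have h1 : v ∉ U := fun h => hv (hUsupp v h)
    have h2 : v ∉ W := fun h => hv (hWsupp v h)
    simp [hx, h1, h2]
  refine ⟨x, ?_, hzero, ?_⟩
  · funext v
    rw [Pi.zero_apply, signlessLap_mulVec_apply']
    by_cases hvU : v ∈ U
    · have hv1 : x v = 1 := by simp [hx, hvU]
      have hnb : ∀ u ∈ H.neighborFinset v, x u = -1 := by
        intro u hu
        rw [mem_neighborFinset] at hu
        rcases hbip (hUsupp v hvU) hu with ⟨_, huW⟩ | ⟨hvW, _⟩
        · have : u ∉ U := Set.disjoint_right.mp hdisj huW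
          simp [hx, this, huW]
        · exact absurd hvW (Set.disjoint_left.mp hdisj hvU)
      rw [Finset.sum_congr rfl hnb, Finset.sum_const, card_neighborFinset_eq_degree, hv1]
      simp
    · by_cases hvW : v ∈ W
      · have hv1 : x v = -1 := by simp [hx, hvU, hvW]
        have hnb : ∀ u ∈ H.neighborFinset v, x u = 1 := by
          intro u hu
          rw [mem_neighborFinset] at hu
          rcases hbip (hWsupp v hvW) hu with ⟨hvU', _⟩ | ⟨_, huU⟩
          · exact absurd hvU' hvU
          · simp [hx, huU]
        rw [Finset.sum_congr rfl hnb, Finset.sum_const, card_neighborFinset_eq_degree, hv1]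
        simp
      · have hvsupp : v ∉ c.supp := by
          intro hv
          rw [← hUW] at hv
          rcases hv with h | h
          · exact hvU h
          · exact hvW h
        have hv0 : x v = 0 := by simp [hx, hvU, hvW]
        have hnb : ∀ u ∈ H.neighborFinset v, x u = 0 := by
          intro u hu
          rw [mem_neighborFinset] at hu
          apply hzero
          intro husupp
          apply hvsupp
          rw [ConnectedComponent.mem_supp_iff] at husupp ⊢
          rw [← husupp]
          exact ConnectedComponent.sound hu.reachable
        rw [Finset.sum_congr rfl hnb, Finset.sum_const, hv0]
        simp
  · obtain ⟨v, hv⟩ := c.exists_rep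
    have hvsupp : v ∈ c.supp := by rw [ConnectedComponent.mem_supp_iff]; exact hv
    have : v ∈ U ∪ W := hUW ▸ hvsupp
    rcases this with h | h
    · exact ⟨v, by simp [hx, h], hvsupp⟩
    · refine ⟨v, ?_, hvsupp⟩
      by_cases h' : v ∈ U
      · simp [hx, h']
      · simp [hx, h', h]

lemma quad_expand {V : Type*} [Fintype V] [DecidableEq V] {M : Matrix V V ℝ}
    (hM : M.IsHermitian) (x : V → ℝ) :
    x ⬝ᵥ (M *ᵥ x) = ∑ i, hM.eigenvalues i *
      ((star (hM.eigenvectorUnitary : Matrix V V ℝ)) *ᵥ x) i ^ 2 := by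
  have hstar : star (hM.eigenvectorUnitary : Matrix V V ℝ)
      = (hM.eigenvectorUnitary : Matrix V V ℝ)ᵀ := by
    rw [star_eq_conjTranspose, conjTranspose_eq_transpose_of_trivial]
  have hspec : M = (hM.eigenvectorUnitary : Matrix V V ℝ) * diagonal hM.eigenvalues
      * star (hM.eigenvectorUnitary : Matrix V V ℝ) := by
    have h := hM.spectral_theorem
    rwa [RCLike.ofReal_real_eq_id, Function.id_comp] at h
  conv_lhs => rw [hspec]
  rw [← mulVec_mulVec, ← mulVec_mulVec, dotProduct_mulVec, ← mulVec_transpose, ← hstar]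
  simp only [dotProduct, mulVec_diagonal]
  exact Finset.sum_congr rfl fun i _ => by ring

lemma norm_expand {V : Type*} [Fintype V] [DecidableEq V] {M : Matrix V V ℝ}
    (hM : M.IsHermitian) (x : V → ℝ) :
    x ⬝ᵥ x = ∑ i, ((star (hM.eigenvectorUnitary : Matrix V V ℝ)) *ᵥ x) i ^ 2 := by
  have hstar : star (hM.eigenvectorUnitary : Matrix V V ℝ)
      = (hM.eigenvectorUnitary : Matrix V V ℝ)ᵀ := by
    rw [star_eq_conjTranspose, conjTranspose_eq_transpose_of_trivial]
  have hUU : (hM.eigenvectorUnitary : Matrix V V ℝ)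
      * star (hM.eigenvectorUnitary : Matrix V V ℝ) = 1 :=
    mem_unitaryGroup_iff.mp (hM.eigenvectorUnitary).2
  calc x ⬝ᵥ x = x ⬝ᵥ (((hM.eigenvectorUnitary : Matrix V V ℝ)
      * star (hM.eigenvectorUnitary : Matrix V V ℝ)) *ᵥ x) := by rw [hUU, one_mulVec]
    _ = ∑ i, ((star (hM.eigenvectorUnitary : Matrix V V ℝ)) *ᵥ x) i ^ 2 := by
        rw [← mulVec_mulVec, dotProduct_mulVec, ← mulVec_transpose, ← hstar]
        simp only [dotProduct]
        exact Finset.sum_congr rfl fun i _ => by ring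

/-- If `G` is a graph of order `n ≥ 2` whose complement has at least two bipartite
components, then `q₂(G) = n - 2`. -/
theorem q2_eq_of_two_bipartite_components (n : ℕ) (hn : 2 ≤ n)
    (G : SimpleGraph (Fin n)) [DecidableRel G.Adj]
    (h : ∃ c₁ c₂ : Gᶜ.ConnectedComponent, c₁ ≠ c₂ ∧
        IsBipartiteComponent Gᶜ c₁ ∧ IsBipartiteComponent Gᶜ c₂) :
    qEig G 2 = (n : ℝ) - 2 := by
  classical
  obtain ⟨c₁, c₂, hc12, hb₁, hb₂⟩ := h
  have hM : (signlessLap G).IsHermitian := signlessLap_isHermitian G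
  set μ : Fin n → ℝ := hM.eigenvalues with hμdef
  set Umat : Matrix (Fin n) (Fin n) ℝ := (hM.eigenvectorUnitary : Matrix (Fin n) (Fin n) ℝ)
    with hUdef
  have hUU : Umat * star Umat = 1 := mem_unitaryGroup_iff.mp (hM.eigenvectorUnitary).2
  have hUU' : star Umat * Umat = 1 := mem_unitaryGroup_iff'.mp (hM.eigenvectorUnitary).2
  have hrec : ∀ y : Fin n → ℝ, star Umat *ᵥ (Umat *ᵥ y) = y := by
    intro y; rw [mulVec_mulVec, hUU', one_mulVec]
  have hquad : ∀ x, x ⬝ᵥ (signlessLap G *ᵥ x) = ∑ i, μ i * (star Umat *ᵥ x) i ^ 2 :=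
    fun x => quad_expand hM x
  have hnorm : ∀ x, x ⬝ᵥ x = ∑ i, (star Umat *ᵥ x) i ^ 2 := fun x => norm_expand hM x
  have hcount1 : (Finset.univ.filter (fun i => (n:ℝ) - 2 < μ i)).card ≤ 1 := by
    by_contra hgt
    push_neg at hgt
    obtain ⟨i, hi, j, hj, hij⟩ := Finset.one_lt_card.mp hgt
    rw [Finset.mem_filter] at hi hj
    obtain ⟨a, b, hab, habzero⟩ : ∃ a b : ℝ, (a ≠ 0 ∨ b ≠ 0) ∧
        a * (∑ v, Umat v i) + b * (∑ v, Umat v j) = 0 := by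
      by_cases hwi : (∑ v, Umat v i) = 0
      · exact ⟨1, 0, Or.inl one_ne_zero, by rw [hwi]; ring⟩
      · exact ⟨(∑ v, Umat v j), -(∑ v, Umat v i), Or.inr (neg_ne_zero.mpr hwi), by ring⟩
    set y : Fin n → ℝ := fun k => if k = i then a else if k = j then b else 0 with hydef
    set x := Umat *ᵥ y with hxdef
    have hyx : star Umat *ᵥ x = y := hrec y
    have hsq : ∀ k, y k ^ 2 = (if k = i then a^2 else if k = j then b^2 else 0) := by
      intro k; rw [hydef]; dsimp only; split_ifs <;> ring
    have hxMx : x ⬝ᵥ (signlessLap G *ᵥ x) = μ i * a^2 + μ j * b^2 := by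
      rw [hquad x, hyx]
      simp_rw [hsq]
      exact sum_ite_two hij μ (a^2) (b^2)
    have hxx : x ⬝ᵥ x = a^2 + b^2 := by
      rw [hnorm x, hyx]
      simp_rw [hsq]
      have := sum_ite_two hij (fun _ => (1:ℝ)) (a^2) (b^2)
      simpa using this
    have hsumx : ∑ v, x v = 0 := by
      rw [hxdef]
      have hrw : ∑ v, (Umat *ᵥ y) v = ∑ k, (∑ v, Umat v k) * y k := by
        simp_rw [mulVec, dotProduct]
        rw [Finset.sum_comm]
        exact Finset.sum_congr rfl fun k _ => by rw [Finset.sum_mul]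
      rw [hrw, sum_ite_two hij (fun k => ∑ v, Umat v k) a b]
      linarith [habzero]
    have hpsd := signlessLap_dot_nonneg Gᶜ x
    have hident := signlessLap_compl_identity (by omega) G x
    rw [hsumx, hxMx, hxx] at hident
    rcases hab with ha | hb
    · have ha2 : 0 < a^2 := by positivity
      nlinarith [sq_nonneg b, hi.2, hj.2]
    · have hb2 : 0 < b^2 := by positivity
      nlinarith [sq_nonneg a, hi.2, hj.2]
  have hcount2 : 2 ≤ (Finset.univ.filter (fun i => (n:ℝ) - 2 ≤ μ i)).card := by
    by_contra hlt
    push_neg at hlt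
    obtain ⟨i₀, hi₀⟩ : ∃ i₀, (Finset.univ.filter (fun i => (n:ℝ) - 2 ≤ μ i)) ⊆ {i₀} := by
      have : Nonempty (Fin n) := ⟨⟨0, by omega⟩⟩
      exact Finset.card_le_one_iff_subset_singleton.mp (by omega)
    have hμlt : ∀ k, k ≠ i₀ → μ k < (n:ℝ) - 2 := by
      intro k hk
      by_contra hge
      push_neg at hge
      have hmem : k ∈ ({i₀} : Finset (Fin n)) :=
        hi₀ (Finset.mem_filter.mpr ⟨Finset.mem_univ k, hge⟩)
      exact hk (Finset.mem_singleton.mp hmem)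
    obtain ⟨x₁, hK₁, hs₁, v₁, hv₁ne, hv₁⟩ := exists_kernel_vec Gᶜ c₁ hb₁
    obtain ⟨x₂, hK₂, hs₂, v₂, hv₂ne, hv₂⟩ := exists_kernel_vec Gᶜ c₂ hb₂
    have hd₁ : x₂ v₁ = 0 := by
      apply hs₂
      rw [ConnectedComponent.mem_supp_iff] at hv₁ ⊢
      rw [hv₁]
      exact hc12
    have hd₂ : x₁ v₂ = 0 := by
      apply hs₁
      rw [ConnectedComponent.mem_supp_iff] at hv₂ ⊢
      rw [hv₂]
      exact fun hh => hc12 hh.symm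
    obtain ⟨a, b, hab, habzero⟩ : ∃ a b : ℝ, (a ≠ 0 ∨ b ≠ 0) ∧
        a * (star Umat *ᵥ x₁) i₀ + b * (star Umat *ᵥ x₂) i₀ = 0 := by
      by_cases hw : (star Umat *ᵥ x₁) i₀ = 0
      · exact ⟨1, 0, Or.inl one_ne_zero, by rw [hw]; ring⟩
      · exact ⟨(star Umat *ᵥ x₂) i₀, -(star Umat *ᵥ x₁) i₀,
          Or.inr (neg_ne_zero.mpr hw), by ring⟩
    set x := a • x₁ + b • x₂ with hxdef
    have hKx : signlessLap Gᶜ *ᵥ x = 0 := by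
      rw [hxdef, mulVec_add, mulVec_smul, mulVec_smul, hK₁, hK₂]
      simp
    have hxne : ∃ v, x v ≠ 0 := by
      rcases hab with ha | hb
      · refine ⟨v₁, ?_⟩
        rw [hxdef]
        simp only [Pi.add_apply, Pi.smul_apply, smul_eq_mul, hd₁, mul_zero, add_zero]
        exact mul_ne_zero ha hv₁ne
      · refine ⟨v₂, ?_⟩
        rw [hxdef]
        simp only [Pi.add_apply, Pi.smul_apply, smul_eq_mul, hd₂, mul_zero, zero_add]
        exact mul_ne_zero hb hv₂ne
    set y := star Umat *ᵥ x with hydef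
    have hyi₀ : y i₀ = 0 := by
      rw [hydef, hxdef, mulVec_add, mulVec_smul, mulVec_smul]
      simp only [Pi.add_apply, Pi.smul_apply, smul_eq_mul]
      exact habzero
    have hxy : Umat *ᵥ y = x := by rw [hydef, mulVec_mulVec, hUU, one_mulVec]
    have hyne : ∃ k, y k ≠ 0 := by
      by_contra h0
      push_neg at h0
      have hy0 : y = 0 := funext h0
      obtain ⟨v, hv⟩ := hxne
      rw [← hxy, hy0] at hv
      simp at hv
    obtain ⟨k, hk⟩ := hyne
    have hki₀ : k ≠ i₀ := fun hck => hk (by rw [hck]; exact hyi₀)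
    have hstrict : ∑ i1, μ i1 * y i1 ^ 2 < ∑ i1, ((n:ℝ)-2) * y i1 ^ 2 := by
      apply Finset.sum_lt_sum
      · intro i1 _
        by_cases hii : i1 = i₀
        · rw [hii, hyi₀]; simp
        · have := hμlt i1 hii
          nlinarith [sq_nonneg (y i1)]
      · refine ⟨k, Finset.mem_univ k, ?_⟩
        have h1 := hμlt k hki₀
        have h2 : 0 < y k ^ 2 := by positivity
        nlinarith
    have hident := signlessLap_compl_identity (by omega) G x
    rw [hKx] at hident
    simp only [dotProduct_zero] at hident
    have hq := hquad x
    have hno := hnorm x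
    rw [← hydef] at hq hno
    rw [hq, hno] at hident
    have hsum2 : ∑ i1, ((n:ℝ)-2) * y i1 ^ 2 = ((n:ℝ)-2) * ∑ i1, y i1 ^ 2 := by
      rw [Finset.mul_sum]
    nlinarith [sq_nonneg (∑ v, x v)]
  -- final glue
  have hcard : Fintype.card (Fin n) = n := Fintype.card_fin n
  have hlt2 : (2:ℕ) - 1 < Fintype.card (Fin n) := by omega
  simp only [qEig, kthEig, dif_pos hM, dif_pos hlt2]
  have hm2 : 2 ≤ Fintype.card (Fin n) := by omega
  set e := (Fintype.equivFin (Fin n)).symm with hedef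
  apply sorted_val_eq _ _ hm2
  · calc (Finset.univ.filter (fun a => (n:ℝ) - 2 < (μ ∘ e) a)).card
        = (Finset.univ.filter (fun i => (n:ℝ) - 2 < μ i)).card :=
          card_filter_equiv e (fun v => (n:ℝ) - 2 < μ v)
      _ ≤ 1 := hcount1
  · calc (2:ℕ) ≤ (Finset.univ.filter (fun i => (n:ℝ) - 2 ≤ μ i)).card := hcount2
      _ = (Finset.univ.filter (fun a => (n:ℝ) - 2 ≤ (μ ∘ e) a)).card :=
          (card_filter_equiv e (fun v => (n:ℝ) - 2 ≤ μ v)).symm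
  · rw [Fin.val_rev]
end
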